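/- arXiv:2411.01685 — 2 statements merged into one kernel-verified Lean document; each statement's English description precedes it below -/
import Mathlib

section
/- Let S_a, S_b be score random variables with continuous strictly increasing CDFs F_a, F_b on [0,1], and define the calibrated score for group a by T_a(x) = α·x + (1−α)·Q_b(F_a(x)) and for group b by T_b(x) = α·Q_a(F_b(x)) + (1−α)·x, where Q_g = F_g^{-1}. Then T_a(S_a) and T_b(S_b) have the same distribution. -/
open MeasureTheory Set

namespace CalibAux

variable {Ω : Type*} [MeasurableSpace Ω] {μ : Measure Ω} [IsProbabilityMeasure μ]
variable {S : Ω → ℝ} {F Q : ℝ → ℝ}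

lemma F_nonneg (hF : ∀ x, F x = (μ {ω | S ω ≤ x}).toReal) (x : ℝ) : 0 ≤ F x := by
  rw [hF]; exact ENNReal.toReal_nonneg

lemma F_mono (hF : ∀ x, F x = (μ {ω | S ω ≤ x}).toReal) : Monotone F := by
  intro x y hxy
  rw [hF, hF]
  exact ENNReal.toReal_mono (measure_ne_top μ _)
    (measure_mono fun ω (h : S ω ≤ x) => h.trans hxy)

lemma F_one (hF : ∀ x, F x = (μ {ω | S ω ≤ x}).toReal)
    (hS01 : ∀ ω, S ω ∈ Icc (0:ℝ) 1) : F 1 = 1 := by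
  rw [hF]
  have : {ω | S ω ≤ 1} = univ := eq_univ_of_forall fun ω => (hS01 ω).2
  rw [this, measure_univ, ENNReal.toReal_one]

lemma F_neg (hF : ∀ x, F x = (μ {ω | S ω ≤ x}).toReal)
    (hS01 : ∀ ω, S ω ∈ Icc (0:ℝ) 1) {x : ℝ} (hx : x < 0) : F x = 0 := by
  rw [hF]
  have : {ω | S ω ≤ x} = ∅ :=
    eq_empty_of_forall_notMem fun ω h => absurd (le_trans (hS01 ω).1 h) (not_le.mpr hx)
  rw [this, measure_empty, ENNReal.toReal_zero]

lemma F_gt (hF : ∀ x, F x = (μ {ω | S ω ≤ x}).toReal)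
    (hS01 : ∀ ω, S ω ∈ Icc (0:ℝ) 1) {x : ℝ} (hx : 1 < x) : F x = 1 := by
  rw [hF]
  have : {ω | S ω ≤ x} = univ := eq_univ_of_forall fun ω => le_trans (hS01 ω).2 hx.le
  rw [this, measure_univ, ENNReal.toReal_one]

lemma F_mem (hF : ∀ x, F x = (μ {ω | S ω ≤ x}).toReal)
    (hS01 : ∀ ω, S ω ∈ Icc (0:ℝ) 1) (x : ℝ) : F x ∈ Icc (0:ℝ) 1 := by
  refine ⟨F_nonneg hF x, ?_⟩
  rcases le_or_gt x 1 with h | h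
  · calc F x ≤ F 1 := F_mono hF h
      _ = 1 := F_one hF hS01
  · exact (F_gt hF hS01 h).le

lemma Q_mem_Ioo (hF : ∀ x, F x = (μ {ω | S ω ≤ x}).toReal)
    (hS01 : ∀ ω, S ω ∈ Icc (0:ℝ) 1)
    (hQ' : ∀ p ∈ Icc (0:ℝ) 1, F (Q p) = p) {p : ℝ} (hp : p ∈ Ioo (0:ℝ) 1) :
    Q p ∈ Icc (0:ℝ) 1 := by
  have h := hQ' p (Ioo_subset_Icc_self hp)
  constructor
  · by_contra hc; push_neg at hc
    rw [F_neg hF hS01 hc] at h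
    exact absurd h.symm hp.1.ne'
  · by_contra hc; push_neg at hc
    rw [F_gt hF hS01 hc] at h
    exact absurd h.symm hp.2.ne

lemma F_zero (hF : ∀ x, F x = (μ {ω | S ω ≤ x}).toReal)
    (hS01 : ∀ ω, S ω ∈ Icc (0:ℝ) 1) (hm : StrictMonoOn F (Icc (0:ℝ) 1))
    (hQ' : ∀ p ∈ Icc (0:ℝ) 1, F (Q p) = p) : F 0 = 0 := by
  by_contra h
  have h0 : 0 < F 0 := (F_nonneg hF 0).lt_of_ne (Ne.symm h)
  have h1 : F 0 ≤ 1 := (F_mem hF hS01 0).2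
  have hp : F 0 / 2 ∈ Ioo (0:ℝ) 1 := ⟨by linarith, by linarith⟩
  have hQm := Q_mem_Ioo hF hS01 hQ' hp
  have he : F (Q (F 0 / 2)) = F 0 / 2 := hQ' _ (Ioo_subset_Icc_self hp)
  have hle : F 0 ≤ F (Q (F 0 / 2)) :=
    hm.monotoneOn (left_mem_Icc.mpr zero_le_one) hQm hQm.1
  linarith

lemma Q_mem (hF : ∀ x, F x = (μ {ω | S ω ≤ x}).toReal)
    (hS01 : ∀ ω, S ω ∈ Icc (0:ℝ) 1) (hm : StrictMonoOn F (Icc (0:ℝ) 1))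
    (hQ : ∀ x ∈ Icc (0:ℝ) 1, Q (F x) = x)
    (hQ' : ∀ p ∈ Icc (0:ℝ) 1, F (Q p) = p) {p : ℝ} (hp : p ∈ Icc (0:ℝ) 1) :
    Q p ∈ Icc (0:ℝ) 1 := by
  rcases eq_or_lt_of_le hp.1 with h0 | h0
  · have : Q 0 = 0 := by
      have := hQ 0 (left_mem_Icc.mpr zero_le_one)
      rwa [F_zero hF hS01 hm hQ'] at this
    rw [← h0, this]; exact left_mem_Icc.mpr zero_le_one
  rcases eq_or_lt_of_le hp.2 with h1 | h1
  · have : Q 1 = 1 := by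
      have := hQ 1 (right_mem_Icc.mpr zero_le_one)
      rwa [F_one hF hS01] at this
    rw [h1, this]; exact right_mem_Icc.mpr zero_le_one
  · exact Q_mem_Ioo hF hS01 hQ' ⟨h0, h1⟩

lemma Q_monoOn (hF : ∀ x, F x = (μ {ω | S ω ≤ x}).toReal)
    (hS01 : ∀ ω, S ω ∈ Icc (0:ℝ) 1) (hm : StrictMonoOn F (Icc (0:ℝ) 1))
    (hQ : ∀ x ∈ Icc (0:ℝ) 1, Q (F x) = x)
    (hQ' : ∀ p ∈ Icc (0:ℝ) 1, F (Q p) = p) :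
    MonotoneOn Q (Icc (0:ℝ) 1) := by
  intro p hp q hq hpq
  by_contra h; push_neg at h
  have := hm (Q_mem hF hS01 hm hQ hQ' hq) (Q_mem hF hS01 hm hQ hQ' hp) h
  rw [hQ' p hp, hQ' q hq] at this
  exact absurd hpq (not_le.mpr this)

lemma cdf_unif (hF : ∀ x, F x = (μ {ω | S ω ≤ x}).toReal)
    (hS01 : ∀ ω, S ω ∈ Icc (0:ℝ) 1) (hm : StrictMonoOn F (Icc (0:ℝ) 1))
    (hQ' : ∀ p ∈ Icc (0:ℝ) 1, F (Q p) = p) (t : ℝ) :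
    μ {ω | F (S ω) ≤ t} = ENNReal.ofReal (min t 1) := by
  rcases lt_or_ge t 0 with ht | ht
  · have he : {ω | F (S ω) ≤ t} = ∅ :=
      eq_empty_of_forall_notMem fun ω h =>
        absurd h (not_le.mpr (ht.trans_le (F_nonneg hF _)))
    rw [he, measure_empty, eq_comm, ENNReal.ofReal_eq_zero]
    exact (min_le_left t 1).trans ht.le
  rcases le_or_gt 1 t with ht1 | ht1
  · have he : {ω | F (S ω) ≤ t} = univ :=
      eq_univ_of_forall fun ω => le_trans (F_mem hF hS01 (S ω)).2 ht1
    rw [he, measure_univ, min_eq_right ht1, ENNReal.ofReal_one]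
  rcases eq_or_lt_of_le ht with ht0 | ht0
  · have hsub : {ω | F (S ω) ≤ t} ⊆ {ω | S ω ≤ 0} := by
      intro ω h
      simp only [mem_setOf_eq] at h ⊢
      by_contra hc; push_neg at hc
      have hlt := hm (left_mem_Icc.mpr zero_le_one) (hS01 ω) hc
      rw [F_zero hF hS01 hm hQ'] at hlt
      exact absurd h (not_le.mpr (ht0 ▸ hlt))
    have h0 : μ {ω | S ω ≤ 0} = 0 := by
      have h1 : (μ {ω | S ω ≤ 0}).toReal = 0 := by
        rw [← hF 0, F_zero hF hS01 hm hQ']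
      exact ((ENNReal.toReal_eq_zero_iff _).mp h1).resolve_right (measure_ne_top μ _)
    rw [measure_mono_null hsub h0, ← ht0, min_eq_left zero_le_one, ENNReal.ofReal_zero]
  · have hti : t ∈ Ioo (0:ℝ) 1 := ⟨ht0, ht1⟩
    have hQm := Q_mem_Ioo hF hS01 hQ' hti
    have hFQ : F (Q t) = t := hQ' t (Ioo_subset_Icc_self hti)
    have hset : {ω | F (S ω) ≤ t} = {ω | S ω ≤ Q t} := by
      ext ω
      simp only [mem_setOf_eq]
      constructor
      · intro h
        by_contra hc; push_neg at hc
        have := hm hQm (hS01 ω) hc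
        rw [hFQ] at this
        linarith
      · intro h
        have := hm.monotoneOn (hS01 ω) hQm h
        rwa [hFQ] at this
    rw [hset, min_eq_left ht1.le]
    conv_rhs => rw [← hFQ, hF]
    rw [ENNReal.ofReal_toReal (measure_ne_top μ _)]

end CalibAux

/-- with continuous strictly increasing group CDFs `F_a`, `F_b`
on `[0,1]` with inverses (quantile functions) `Q_a`, `Q_b`, the calibrated
scores `T_a(S_a) = α·S_a + (1−α)·Q_b(F_a(S_a))` and
`T_b(S_b) = α·Q_a(F_b(S_b)) + (1−α)·S_b` have the same distribution. -/
theorem calibrated_scores_same_distribution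
    {Ω : Type*} [MeasurableSpace Ω] (μ : Measure Ω) [IsProbabilityMeasure μ]
    (Sa Sb : Ω → ℝ) (hSa : Measurable Sa) (hSb : Measurable Sb)
    (hSa01 : ∀ ω, Sa ω ∈ Icc (0:ℝ) 1) (hSb01 : ∀ ω, Sb ω ∈ Icc (0:ℝ) 1)
    (Fa Fb Qa Qb : ℝ → ℝ)
    (hFa : ∀ x, Fa x = (μ {ω | Sa ω ≤ x}).toReal)
    (hFb : ∀ x, Fb x = (μ {ω | Sb ω ≤ x}).toReal)
    (hca : ContinuousOn Fa (Icc (0:ℝ) 1)) (hcb : ContinuousOn Fb (Icc (0:ℝ) 1))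
    (hma : StrictMonoOn Fa (Icc (0:ℝ) 1)) (hmb : StrictMonoOn Fb (Icc (0:ℝ) 1))
    (hQa : ∀ x ∈ Icc (0:ℝ) 1, Qa (Fa x) = x)
    (hQb : ∀ x ∈ Icc (0:ℝ) 1, Qb (Fb x) = x)
    (hQa' : ∀ p ∈ Icc (0:ℝ) 1, Fa (Qa p) = p)
    (hQb' : ∀ p ∈ Icc (0:ℝ) 1, Fb (Qb p) = p)
    (α : ℝ) (hα : α ∈ Icc (0:ℝ) 1) :
    μ.map (fun ω => α * Sa ω + (1 - α) * Qb (Fa (Sa ω)))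
      = μ.map (fun ω => α * Qa (Fb (Sb ω)) + (1 - α) * Sb ω) := by
  classical
  -- clamp to [0,1]
  set c : ℝ → ℝ := fun p => max 0 (min 1 p) with hc
  have hcmem : ∀ p, c p ∈ Icc (0:ℝ) 1 :=
    fun p => ⟨le_max_left _ _, max_le zero_le_one (min_le_left _ _)⟩
  have hceq : ∀ p ∈ Icc (0:ℝ) 1, c p = p := fun p hp => by
    simp only [hc]; rw [min_eq_right hp.2, max_eq_right hp.1]
  have hcmono : Monotone c := fun p q h => max_le_max le_rfl (min_le_min le_rfl h)
  -- the transport map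
  set G : ℝ → ℝ := fun p => α * Qa (c p) + (1 - α) * Qb (c p) with hG
  have hQamono := CalibAux.Q_monoOn hFa hSa01 hma hQa hQa'
  have hQbmono := CalibAux.Q_monoOn hFb hSb01 hmb hQb hQb'
  have hGmono : Monotone G := by
    intro p q h
    have h1 : Qa (c p) ≤ Qa (c q) := hQamono (hcmem p) (hcmem q) (hcmono h)
    have h2 : Qb (c p) ≤ Qb (c q) := hQbmono (hcmem p) (hcmem q) (hcmono h)
    have hα2 : (0:ℝ) ≤ 1 - α := by linarith [hα.2]
    exact add_le_add (mul_le_mul_of_nonneg_left h1 hα.1)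
      (mul_le_mul_of_nonneg_left h2 hα2)
  have hGmeas : Measurable G := hGmono.measurable
  have hUa : Measurable (fun ω => Fa (Sa ω)) :=
    (CalibAux.F_mono hFa).measurable.comp hSa
  have hUb : Measurable (fun ω => Fb (Sb ω)) :=
    (CalibAux.F_mono hFb).measurable.comp hSb
  have hAe : (fun ω => α * Sa ω + (1 - α) * Qb (Fa (Sa ω)))
      = G ∘ (fun ω => Fa (Sa ω)) := by
    funext ω
    have hmem := CalibAux.F_mem hFa hSa01 (Sa ω)
    simp only [hG, Function.comp_apply, hceq _ hmem, hQa (Sa ω) (hSa01 ω)]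
  have hBe : (fun ω => α * Qa (Fb (Sb ω)) + (1 - α) * Sb ω)
      = G ∘ (fun ω => Fb (Sb ω)) := by
    funext ω
    have hmem := CalibAux.F_mem hFb hSb01 (Sb ω)
    simp only [hG, Function.comp_apply, hceq _ hmem, hQb (Sb ω) (hSb01 ω)]
  rw [hAe, hBe, ← Measure.map_map hGmeas hUa, ← Measure.map_map hGmeas hUb]
  congr 1
  have hP : IsProbabilityMeasure (μ.map (fun ω => Fa (Sa ω))) :=
    Measure.isProbabilityMeasure_map hUa.aemeasurable
  refine Measure.ext_of_Iic _ _ fun t => ?_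
  rw [Measure.map_apply hUa measurableSet_Iic, Measure.map_apply hUb measurableSet_Iic]
  have ha : (fun ω => Fa (Sa ω)) ⁻¹' Iic t = {ω | Fa (Sa ω) ≤ t} := rfl
  have hb : (fun ω => Fb (Sb ω)) ⁻¹' Iic t = {ω | Fb (Sb ω) ≤ t} := rfl
  rw [ha, hb, CalibAux.cdf_unif hFa hSa01 hma hQa' t,
    CalibAux.cdf_unif hFb hSb01 hmb hQb' t]
end

section
/- Under the quantile calibration map to the α-weighted barycenter, the overall expected risk E[|ŝ(X) − s(X)|] = P(A=a)·E[|T_a(S_a) − S_a|] + P(A=b)·E[|T_b(S_b) − S_b|] equals 2·α·(1−α)·E[|Q_a(U) − Q_b(U)|] when α = P(A=a), where U is uniform on [0,1]. -/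
open MeasureTheory Set


private lemma Qmono_of (F Q : ℝ → ℝ) (hF : Monotone F)
    (hFQ : ∀ p ∈ Icc (0:ℝ) 1, F (Q p) = p) :
    ∀ p ∈ Icc (0:ℝ) 1, ∀ q ∈ Icc (0:ℝ) 1, p ≤ q → Q p ≤ Q q := by
  intro p hp q hq hpq
  by_contra hlt
  push_neg at hlt
  have h2 := hF hlt.le
  rw [hFQ p hp, hFQ q hq] at h2
  have : p = q := le_antisymm hpq h2
  subst this
  exact absurd rfl hlt.ne

private lemma Qaemeas (Q : ℝ → ℝ) (hmem : ∀ p ∈ Ioo (0:ℝ) 1, Q p ∈ Icc (0:ℝ) 1)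
    (hmono : ∀ p ∈ Ioo (0:ℝ) 1, ∀ q ∈ Ioo (0:ℝ) 1, p ≤ q → Q p ≤ Q q) :
    AEMeasurable Q (volume.restrict (Icc (0:ℝ) 1)) := by
  set Q' : ℝ → ℝ := fun p => if p ≤ 0 then 0 else if 1 ≤ p then 1 else Q p with hQ'def
  have hmemQ' : ∀ p, Q' p ∈ Icc (0:ℝ) 1 := by
    intro p
    simp only [hQ'def]
    split_ifs with h1 h2
    · exact ⟨le_refl 0, zero_le_one⟩
    · exact ⟨zero_le_one, le_refl 1⟩
    · exact hmem p ⟨lt_of_not_ge h1, lt_of_not_ge h2⟩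
  have hmonoQ' : Monotone Q' := by
    intro p q hpq
    by_cases hp0 : p ≤ 0
    · simp only [hQ'def, if_pos hp0]
      exact (hmemQ' q).1
    · by_cases hp1 : (1:ℝ) ≤ p
      · have hq1 : (1:ℝ) ≤ q := hp1.trans hpq
        have hq0 : ¬ q ≤ 0 := fun h => absurd (hp1.trans (hpq.trans h)) (by norm_num)
        simp only [hQ'def, if_neg hp0, if_pos hp1, if_neg hq0, if_pos hq1, le_refl]
      · have hpI : p ∈ Ioo (0:ℝ) 1 := ⟨lt_of_not_ge hp0, lt_of_not_ge hp1⟩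
        have hq0 : ¬ q ≤ 0 := fun h => hp0 (hpq.trans h)
        by_cases hq1 : (1:ℝ) ≤ q
        · simp only [hQ'def, if_neg hp0, if_neg hp1, if_neg hq0, if_pos hq1]
          exact (hmem p hpI).2
        · simp only [hQ'def, if_neg hp0, if_neg hp1, if_neg hq0, if_neg hq1]
          exact hmono p hpI q ⟨lt_of_not_ge hq0, lt_of_not_ge hq1⟩ hpq
  have hms : Measurable Q' := hmonoQ'.measurable
  refine hms.aemeasurable.congr ?_
  have hIoo : Ioo (0:ℝ) 1 ∈ ae (volume.restrict (Icc (0:ℝ) 1)) := by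
    rw [mem_ae_iff, Measure.restrict_apply measurableSet_Ioo.compl]
    have hsub : (Ioo (0:ℝ) 1)ᶜ ∩ Icc 0 1 ⊆ {(0:ℝ), 1} := by
      intro x ⟨hx1, hx2⟩
      simp only [mem_compl_iff, mem_Ioo, not_and_or, not_lt] at hx1
      rcases hx1 with h | h
      · exact Or.inl (le_antisymm h hx2.1)
      · exact Or.inr (le_antisymm hx2.2 h)
    refine measure_mono_null hsub ?_
    rw [insert_eq]
    exact measure_union_null (by simp) (by simp)
  exact Filter.eventually_of_mem hIoo (fun x hx => by
    simp only [hQ'def, if_neg (not_le.2 hx.1), if_neg (not_le.2 hx.2)])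

private lemma Fmono_of {Ω : Type*} [MeasurableSpace Ω] (μ : Measure Ω) [IsProbabilityMeasure μ]
    (S : Ω → ℝ) (F : ℝ → ℝ) (hF : ∀ x, F x = (μ {ω | S ω ≤ x}).toReal) : Monotone F := by
  intro x y hxy
  rw [hF, hF]
  exact ENNReal.toReal_mono (measure_ne_top μ _) (measure_mono (fun ω h => le_trans h hxy))

private lemma Qmem_of {Ω : Type*} [MeasurableSpace Ω] (μ : Measure Ω) [IsProbabilityMeasure μ]
    (S : Ω → ℝ) (hS01 : ∀ ω, S ω ∈ Icc (0:ℝ) 1)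
    (F Q : ℝ → ℝ) (hF : ∀ x, F x = (μ {ω | S ω ≤ x}).toReal)
    (hQF : ∀ p ∈ Icc (0:ℝ) 1, F (Q p) = p) :
    ∀ p ∈ Ioo (0:ℝ) 1, Q p ∈ Icc (0:ℝ) 1 := by
  have hFneg : ∀ x, x < 0 → F x = 0 := by
    intro x hx
    rw [hF]
    have : {ω | S ω ≤ x} = ∅ := by
      ext ω
      simp only [mem_setOf_eq, mem_empty_iff_false, iff_false, not_le]
      exact lt_of_lt_of_le hx (hS01 ω).1
    simp [this]
  have hF1 : ∀ x, 1 ≤ x → F x = 1 := by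
    intro x hx
    rw [hF]
    have : {ω | S ω ≤ x} = univ := eq_univ_of_forall (fun ω => le_trans (hS01 ω).2 hx)
    simp [this]
  intro p hp
  constructor
  · by_contra h
    push_neg at h
    have := hFneg _ h
    rw [hQF p ⟨hp.1.le, hp.2.le⟩] at this
    exact absurd this hp.1.ne'
  · by_contra h
    push_neg at h
    have := hF1 _ h.le
    rw [hQF p ⟨hp.1.le, hp.2.le⟩] at this
    exact absurd this hp.2.ne

private lemma push_lemma
    {Ω : Type*} [MeasurableSpace Ω] (μ : Measure Ω) [IsProbabilityMeasure μ]
    (S : Ω → ℝ) (hS : Measurable S) (hS01 : ∀ ω, S ω ∈ Icc (0:ℝ) 1)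
    (F Q : ℝ → ℝ) (hF : ∀ x, F x = (μ {ω | S ω ≤ x}).toReal)
    (hm : StrictMonoOn F (Icc (0:ℝ) 1))
    (hQF : ∀ p ∈ Icc (0:ℝ) 1, F (Q p) = p) :
    μ.map (fun ω => F (S ω)) = volume.restrict (Icc (0:ℝ) 1) := by
  -- basic facts about F
  have hFmono : Monotone F := by
    intro x y hxy
    rw [hF, hF]
    exact ENNReal.toReal_mono (measure_ne_top μ _)
      (measure_mono (fun ω h => le_trans h hxy))
  have hFnonneg : ∀ x, 0 ≤ F x := fun x => by rw [hF]; exact ENNReal.toReal_nonneg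
  have hFneg : ∀ x, x < 0 → F x = 0 := by
    intro x hx
    rw [hF]
    have : {ω | S ω ≤ x} = ∅ := by
      ext ω
      simp only [mem_setOf_eq, mem_empty_iff_false, iff_false, not_le]
      exact lt_of_lt_of_le hx (hS01 ω).1
    simp [this]
  have hF1 : ∀ x, 1 ≤ x → F x = 1 := by
    intro x hx
    rw [hF]
    have : {ω | S ω ≤ x} = univ := eq_univ_of_forall (fun ω => le_trans (hS01 ω).2 hx)
    simp [this]
  have hFle1 : ∀ x, F x ≤ 1 := by
    intro x
    rw [hF]
    exact ENNReal.toReal_le_of_le_ofReal zero_le_one (by simpa using prob_le_one)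
  have hF0 : F 0 = 0 := by
    by_contra h0
    have hpos : 0 < F 0 := lt_of_le_of_ne (hFnonneg 0) (Ne.symm h0)
    set p := F 0 / 2 with hp
    have hpI : p ∈ Icc (0:ℝ) 1 := ⟨by positivity, by nlinarith [hFle1 0]⟩
    have hFQ := hQF p hpI
    rcases lt_or_ge (Q p) 0 with hq | hq
    · rw [hFneg _ hq] at hFQ; nlinarith
    · have := hFmono hq
      rw [hFQ] at this
      nlinarith
  have hQmem : ∀ p ∈ Ioo (0:ℝ) 1, Q p ∈ Icc (0:ℝ) 1 := by
    intro p hp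
    constructor
    · by_contra h
      push_neg at h
      have := hFneg _ h
      rw [hQF p ⟨hp.1.le, hp.2.le⟩] at this
      exact absurd this hp.1.ne'
    · by_contra h
      push_neg at h
      have := hF1 _ h.le
      rw [hQF p ⟨hp.1.le, hp.2.le⟩] at this
      exact absurd this hp.2.ne
  have hmeas : Measurable (fun ω => F (S ω)) := hFmono.measurable.comp hS
  have : IsProbabilityMeasure (μ.map (fun ω => F (S ω))) :=
    Measure.isProbabilityMeasure_map hmeas.aemeasurable
  refine Measure.ext_of_Iic _ _ (fun t => ?_)
  rw [Measure.map_apply hmeas measurableSet_Iic,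
    Measure.restrict_apply measurableSet_Iic]
  rcases lt_or_ge t 0 with ht | ht
  · have h1 : (fun ω => F (S ω)) ⁻¹' Iic t = ∅ := by
      ext ω
      simp only [mem_preimage, mem_Iic, mem_empty_iff_false, iff_false, not_le]
      exact lt_of_lt_of_le ht (hFnonneg _)
    have h2 : Iic t ∩ Icc (0:ℝ) 1 = ∅ := by
      ext x
      simp only [mem_inter_iff, mem_Iic, mem_Icc, mem_empty_iff_false, iff_false]
      rintro ⟨hx1, hx2, -⟩
      linarith
    simp [h1, h2]
  rcases lt_or_ge t 1 with ht1 | ht1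
  · -- 0 ≤ t < 1
    have hIic : Iic t ∩ Icc (0:ℝ) 1 = Icc 0 t := by
      ext x
      simp only [mem_inter_iff, mem_Iic, mem_Icc]
      constructor
      · rintro ⟨h1, h2, -⟩; exact ⟨h2, h1⟩
      · rintro ⟨h1, h2⟩; exact ⟨h2, h1, h2.trans (ht1.le.trans (le_refl 1)) |>.trans (le_refl 1)⟩
    rcases eq_or_lt_of_le ht with rfl | htpos
    · -- t = 0
      have hsub : (fun ω => F (S ω)) ⁻¹' Iic 0 ⊆ {ω | S ω ≤ 0} := by
        intro ω hω
        simp only [mem_preimage, mem_Iic] at hω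
        by_contra h
        simp only [mem_setOf_eq, not_le] at h
        have := hm ⟨le_refl 0, zero_le_one⟩ (hS01 ω) h
        rw [hF0] at this
        linarith
      have hz : μ {ω | S ω ≤ 0} = 0 := by
        have := hF0
        rw [hF] at this
        exact (ENNReal.toReal_eq_zero_iff _).mp this |>.resolve_right (measure_ne_top μ _)
      rw [measure_mono_null hsub hz, hIic]
      simp
    · -- 0 < t < 1
      have hQt := hQmem t ⟨htpos, ht1⟩
      have hset : (fun ω => F (S ω)) ⁻¹' Iic t = {ω | S ω ≤ Q t} := by
        ext ω
        simp only [mem_preimage, mem_Iic, mem_setOf_eq]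
        constructor
        · intro h
          by_contra hc
          push_neg at hc
          have := hm hQt (hS01 ω) hc
          rw [hQF t ⟨htpos.le, ht1.le⟩] at this
          linarith
        · intro h
          have := hFmono h
          rw [hQF t ⟨htpos.le, ht1.le⟩] at this
          exact this
      have hval : (μ {ω | S ω ≤ Q t}).toReal = t := by
        rw [← hF, hQF t ⟨htpos.le, ht1.le⟩]
      have hμ : μ {ω | S ω ≤ Q t} = ENNReal.ofReal t := by
        rw [← ENNReal.ofReal_toReal (measure_ne_top μ {ω | S ω ≤ Q t}), hval]
      rw [hset, hIic, Real.volume_Icc, hμ, sub_zero]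
  · -- t ≥ 1
    have h1 : (fun ω => F (S ω)) ⁻¹' Iic t = univ := by
      refine eq_univ_of_forall (fun ω => ?_)
      simp only [mem_preimage, mem_Iic]
      exact (hFle1 _).trans ht1
    have h2 : Iic t ∩ Icc (0:ℝ) 1 = Icc 0 1 := by
      refine inter_eq_self_of_subset_right (fun x hx => ?_)
      exact le_trans hx.2 ht1
    rw [h1, h2, Real.volume_Icc]
    simp

/-- the overall expected risk of the quantile calibration,
`P(A=a)·E[|T_a(S_a) − S_a|] + P(A=b)·E[|T_b(S_b) − S_b|]`, equals
`2·α·(1−α)·E[|Q_a(U) − Q_b(U)|]` when `α = P(A=a)` and `U` is uniform on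
`[0,1]`. -/
theorem calibration_overall_risk
    {Ω : Type*} [MeasurableSpace Ω] (μ : Measure Ω) [IsProbabilityMeasure μ]
    (Sa Sb : Ω → ℝ) (hSa : Measurable Sa) (hSb : Measurable Sb)
    (hSa01 : ∀ ω, Sa ω ∈ Icc (0:ℝ) 1) (hSb01 : ∀ ω, Sb ω ∈ Icc (0:ℝ) 1)
    (Fa Fb Qa Qb : ℝ → ℝ)
    (hFa : ∀ x, Fa x = (μ {ω | Sa ω ≤ x}).toReal)
    (hFb : ∀ x, Fb x = (μ {ω | Sb ω ≤ x}).toReal)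
    (hca : ContinuousOn Fa (Icc (0:ℝ) 1)) (hcb : ContinuousOn Fb (Icc (0:ℝ) 1))
    (hma : StrictMonoOn Fa (Icc (0:ℝ) 1)) (hmb : StrictMonoOn Fb (Icc (0:ℝ) 1))
    (hQa : ∀ x ∈ Icc (0:ℝ) 1, Qa (Fa x) = x)
    (hQb : ∀ x ∈ Icc (0:ℝ) 1, Qb (Fb x) = x)
    (hQa' : ∀ p ∈ Icc (0:ℝ) 1, Fa (Qa p) = p)
    (hQb' : ∀ p ∈ Icc (0:ℝ) 1, Fb (Qb p) = p)
    (α : ℝ) (hα : α ∈ Icc (0:ℝ) 1) :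
    α * (∫ ω, |(α * Sa ω + (1 - α) * Qb (Fa (Sa ω))) - Sa ω| ∂μ)
      + (1 - α) * (∫ ω, |(α * Qa (Fb (Sb ω)) + (1 - α) * Sb ω) - Sb ω| ∂μ)
      = 2 * α * (1 - α) * ∫ p in Icc (0:ℝ) 1, |Qa p - Qb p| := by
  have hFamono : Monotone Fa := Fmono_of μ Sa Fa hFa
  have hFbmono : Monotone Fb := Fmono_of μ Sb Fb hFb
  have hQamem := Qmem_of μ Sa hSa01 Fa Qa hFa hQa'
  have hQbmem := Qmem_of μ Sb hSb01 Fb Qb hFb hQb'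
  have hQaae : AEMeasurable Qa (volume.restrict (Icc (0:ℝ) 1)) :=
    Qaemeas Qa hQamem (fun p hp q hq hpq =>
      Qmono_of Fa Qa hFamono hQa' p ⟨hp.1.le, hp.2.le⟩ q ⟨hq.1.le, hq.2.le⟩ hpq)
  have hQbae : AEMeasurable Qb (volume.restrict (Icc (0:ℝ) 1)) :=
    Qaemeas Qb hQbmem (fun p hp q hq hpq =>
      Qmono_of Fb Qb hFbmono hQb' p ⟨hp.1.le, hp.2.le⟩ q ⟨hq.1.le, hq.2.le⟩ hpq)
  have hh : AEStronglyMeasurable (fun p => |Qa p - Qb p|) (volume.restrict (Icc (0:ℝ) 1)) := by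
    have := ((hQaae.sub hQbae).aestronglyMeasurable).norm
    simpa [Real.norm_eq_abs] using this
  have hmapa := push_lemma μ Sa hSa hSa01 Fa Qa hFa hma hQa'
  have hmapb := push_lemma μ Sb hSb hSb01 Fb Qb hFb hmb hQb'
  have hInta : ∫ ω, |Qa (Fa (Sa ω)) - Qb (Fa (Sa ω))| ∂μ
      = ∫ p in Icc (0:ℝ) 1, |Qa p - Qb p| := by
    have hmeas : AEMeasurable (fun ω => Fa (Sa ω)) μ :=
      (hFamono.measurable.comp hSa).aemeasurable
    have hh' : AEStronglyMeasurable (fun p => |Qa p - Qb p|)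
        (μ.map (fun ω => Fa (Sa ω))) := by rw [hmapa]; exact hh
    have h := integral_map hmeas hh'
    rw [hmapa] at h
    exact h.symm
  have hIntb : ∫ ω, |Qa (Fb (Sb ω)) - Qb (Fb (Sb ω))| ∂μ
      = ∫ p in Icc (0:ℝ) 1, |Qa p - Qb p| := by
    have hmeas : AEMeasurable (fun ω => Fb (Sb ω)) μ :=
      (hFbmono.measurable.comp hSb).aemeasurable
    have hh' : AEStronglyMeasurable (fun p => |Qa p - Qb p|)
        (μ.map (fun ω => Fb (Sb ω))) := by rw [hmapb]; exact hh
    have h := integral_map hmeas hh'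
    rw [hmapb] at h
    exact h.symm
  have ea : ∀ ω, |(α * Sa ω + (1 - α) * Qb (Fa (Sa ω))) - Sa ω|
      = (1 - α) * |Qa (Fa (Sa ω)) - Qb (Fa (Sa ω))| := by
    intro ω
    have h1 : Qa (Fa (Sa ω)) = Sa ω := hQa _ (hSa01 ω)
    have h2 : (α * Sa ω + (1 - α) * Qb (Fa (Sa ω))) - Sa ω
        = (1 - α) * (Qb (Fa (Sa ω)) - Sa ω) := by ring
    rw [h2, abs_mul, abs_of_nonneg (by linarith [hα.2] : (0:ℝ) ≤ 1 - α), h1, abs_sub_comm]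
  have eb : ∀ ω, |(α * Qa (Fb (Sb ω)) + (1 - α) * Sb ω) - Sb ω|
      = α * |Qa (Fb (Sb ω)) - Qb (Fb (Sb ω))| := by
    intro ω
    have h1 : Qb (Fb (Sb ω)) = Sb ω := hQb _ (hSb01 ω)
    have h2 : (α * Qa (Fb (Sb ω)) + (1 - α) * Sb ω) - Sb ω
        = α * (Qa (Fb (Sb ω)) - Sb ω) := by ring
    rw [h2, abs_mul, abs_of_nonneg hα.1, h1]
  simp_rw [ea, eb]
  rw [integral_const_mul, integral_const_mul, hInta, hIntb]
  ring
end
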